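/- Let p be a prime, ϑ a primitive p-th root of unity, and M a module over S = ℤ[t]/(t^p − 1) with ker(1 − t^M) = 0. Let (e_i)_{i∈I} be elements of M representing a ℤ/p-basis of coker(1 − t^M). Then the map ψ : ⨁_{i∈I} ℤ[ϑ] → M, (f_i) ↦ Σ f_i(t^M)(e_i), is well defined (N(t^M) = 0 so the S-action factors through ℤ[ϑ] ≅ ℤ[t]/(N(t))) and injective, and its cokernel is uniquely p-divisible. -/

import Mathlib

open Polynomial

/-- The norm endomorphism `N(t) = 1 + t + ⋯ + t^{p-1}` of a module over `ℤ[t]/(t^p - 1)`,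
encoded as an abelian group `M` with an endomorphism `t` satisfying `t^p = 1`. -/
def normEnd (p : ℕ) {M : Type*} [AddCommGroup M] (t : AddMonoid.End M) : AddMonoid.End M :=
  ∑ j ∈ Finset.range p, t ^ j

private theorem keyW (p : ℕ) (hp : p.Prime) :
    ∃ w : ℤ[X], (∑ j ∈ Finset.range p, (X:ℤ[X]) ^ j) - (X - C 1) ^ (p - 1) = C (p:ℤ) * w := by
  haveI : Fact p.Prime := ⟨hp⟩
  suffices h : C (p:ℤ) ∣ (∑ j ∈ Finset.range p, (X:ℤ[X]) ^ j) - (X - C 1) ^ (p - 1) by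
    obtain ⟨w, hw⟩ := h; exact ⟨w, hw⟩
  have hmap : Polynomial.map (Int.castRingHom (ZMod p))
      ((∑ j ∈ Finset.range p, (X:ℤ[X]) ^ j) - (X - C 1) ^ (p - 1)) = 0 := by
    simp only [Polynomial.map_sub, Polynomial.map_pow, Polynomial.map_sum, map_X,
      Polynomial.map_one, map_C, C_1]
    have hX1 : (X - 1 : (ZMod p)[X]) ≠ 0 := by
      simpa using (X_sub_C_ne_zero (1 : ZMod p))
    have hcancel : ((∑ j ∈ Finset.range p, (X:(ZMod p)[X]) ^ j) - (X - 1) ^ (p - 1)) * (X - 1) = 0 := by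
      rw [sub_mul, ← pow_succ, Nat.sub_add_cancel hp.one_lt.le]
      have hc : ((X : (ZMod p)[X]) - 1) ^ p = X ^ p - 1 ^ p :=
        sub_pow_char (x := (X : (ZMod p)[X])) (y := 1)
      rw [hc, geom_sum_mul]
      ring
    rcases mul_eq_zero.mp hcancel with h | h
    · exact h
    · exact absurd h hX1
  rw [C_dvd_iff_dvd_coeff]
  intro n
  have := congrArg (fun q => Polynomial.coeff q n) hmap
  simp only [coeff_map, coeff_zero, Int.coe_castRingHom] at this
  exact_mod_cast (ZMod.intCast_zmod_eq_zero_iff_dvd _ p).mp this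

private theorem krull (p : ℕ) (hp : p.Prime) (f : ℤ[X])
    (h : ∀ n : ℕ, Ideal.Quotient.mk (Ideal.span {(∑ j ∈ Finset.range p, (X:ℤ[X]) ^ j)}) f ∈
      (Ideal.span {Ideal.Quotient.mk (Ideal.span {(∑ j ∈ Finset.range p, (X:ℤ[X]) ^ j)}) (X - C 1)}) ^ n) :
    (∑ j ∈ Finset.range p, (X:ℤ[X]) ^ j) ∣ f := by
  haveI : Fact p.Prime := ⟨hp⟩
  set N : ℤ[X] := ∑ j ∈ Finset.range p, (X:ℤ[X]) ^ j with hN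
  have hNcyc : N = cyclotomic p ℤ := (cyclotomic_prime ℤ p).symm
  have hirr : Irreducible N := hNcyc ▸ cyclotomic.irreducible hp.pos
  have hprime : Prime N := hirr.prime
  haveI hIP : (Ideal.span {N}).IsPrime :=
    (Ideal.span_singleton_prime hprime.ne_zero).mpr hprime
  haveI : IsDomain (ℤ[X] ⧸ Ideal.span {N}) := Ideal.Quotient.isDomain _
  set π := Ideal.Quotient.mk (Ideal.span {N})
  set J : Ideal (ℤ[X] ⧸ Ideal.span {N}) := Ideal.span {π (X - C 1)}
  have hJ : J ≠ ⊤ := by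
    intro htop
    have h1 : (1 : ℤ[X] ⧸ Ideal.span {N}) ∈ J := htop ▸ Submodule.mem_top
    rw [Ideal.mem_span_singleton'] at h1
    obtain ⟨a, ha⟩ := h1
    have hNev : (Polynomial.eval₂RingHom (Int.castRingHom (ZMod p)) 1) N = 0 := by
      simp [hN]
    set φ := Polynomial.eval₂RingHom (Int.castRingHom (ZMod p)) 1 with hφ
    have hker : Ideal.span {N} ≤ RingHom.ker φ := by
      rw [Ideal.span_le, Set.singleton_subset_iff]
      exact hNev
    set ev := Ideal.Quotient.lift (Ideal.span {N}) φ (fun a ha => hker ha)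
    have := congrArg ev ha
    simp only [map_mul, map_one] at this
    have hz : ev (π (X - 1)) = 0 := by
      show φ (X - 1) = 0
      simp [hφ]
    rw [hz, mul_zero] at this
    haveI hnt : Nontrivial (ZMod p) := ZMod.nontrivial_iff.mpr hp.one_lt.ne'
    simp at this
  have hbot := Ideal.iInf_pow_eq_bot_of_isDomain (I := J) hJ
  have : π f ∈ (⨅ n : ℕ, J ^ n) := Ideal.mem_iInf.mpr h
  rw [hbot, Ideal.mem_bot] at this
  rwa [← Ideal.mem_span_singleton, ← Ideal.Quotient.eq_zero_iff_mem]

theorem stmt8 (p : ℕ) (hp : p.Prime) {M : Type*} [AddCommGroup M] {I : Type*}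
    (t : AddMonoid.End M) (ht : t ^ p = 1)
    (hinj : AddMonoidHom.ker ((1 : AddMonoid.End M) - t) = ⊥)
    (e : I → M)
    (hspan : ∀ x : M, ∃ c : I →₀ ℤ,
      x - c.sum (fun i n => n • e i) ∈ AddMonoidHom.range ((1 : AddMonoid.End M) - t))
    (hindep : ∀ c : I →₀ ℤ,
      c.sum (fun i n => n • e i) ∈ AddMonoidHom.range ((1 : AddMonoid.End M) - t) →
      ∀ i, (p : ℤ) ∣ c i)
    (ψ : (I →₀ Polynomial ℤ) → M)
    (hψ : ∀ f : I →₀ Polynomial ℤ, ψ f = f.sum fun i q => Polynomial.aeval t q (e i)) :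
    normEnd p t = 0 ∧
    (∀ f : I →₀ Polynomial ℤ, ψ f = 0 →
      ∀ i, (∑ j ∈ Finset.range p, (Polynomial.X : Polynomial ℤ) ^ j) ∣ f i) ∧
    (∀ x : M, ∃ (y : M) (f : I →₀ Polynomial ℤ), x = p • y + ψ f) ∧
    (∀ x : M, (∃ f : I →₀ Polynomial ℤ, p • x = ψ f) → ∃ f : I →₀ Polynomial ℤ, x = ψ f) := by
  classical
  -- pointwise helper lemmas for AddMonoid.End
  have mulApp : ∀ (a b : AddMonoid.End M) (m : M), (a * b) m = a (b m) := fun _ _ _ => rfl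
  have subApp : ∀ (a b : AddMonoid.End M) (m : M), (a - b) m = a m - b m := fun _ _ _ => rfl
  have oneApp : ∀ m : M, (1 : AddMonoid.End M) m = m := fun _ => rfl
  have castApp : ∀ (z : ℤ) (m : M), ((algebraMap ℤ (AddMonoid.End M)) z) m = z • m :=
    fun z m => by rw [algebraMap_int_eq]; exact AddMonoid.End.intCast_apply z m
  have tsub : ∀ m : M, (t - 1 : AddMonoid.End M) m = -(((1 : AddMonoid.End M) - t) m) := by
    intro m
    rw [subApp, subApp, oneApp, neg_sub]
  -- injectivity of 1 - t, pointwise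
  have hInj : ∀ m : M, ((1 : AddMonoid.End M) - t) m = 0 → m = 0 := by
    intro m hm
    have : m ∈ AddMonoidHom.ker ((1 : AddMonoid.End M) - t) := hm
    rw [hinj] at this
    simpa using this
  -- N(t) = 0
  have hcomm : Commute ((1 : AddMonoid.End M) - t) (normEnd p t) := by
    refine Commute.sub_left (Commute.one_left _) ?_
    exact Commute.sum_right _ _ _ (fun j _ => (Commute.refl t).pow_right j)
  have hNmul : ((1 : AddMonoid.End M) - t) * normEnd p t = 0 := by
    rw [hcomm.eq]
    have h1 : normEnd p t * (t - 1) = t ^ p - 1 := geom_sum_mul t p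
    have h2 : normEnd p t * ((1 : AddMonoid.End M) - t) = -(normEnd p t * (t - 1)) := by
      rw [mul_sub, mul_sub, mul_one, neg_sub]
    rw [h2, h1, ht, sub_self, neg_zero]
  have hN0 : normEnd p t = 0 := by
    refine DFunLike.ext _ _ fun m => ?_
    have happ : ((1 : AddMonoid.End M) - t) (normEnd p t m) = 0 := by
      rw [← mulApp, hNmul]
      rfl
    exact hInj _ happ
  -- bundled Ψ
  set Ψh : (I →₀ ℤ[X]) →+ M := Finsupp.liftAddHom (fun i =>
    { toFun := fun q => Polynomial.aeval t q (e i)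
      map_zero' := by simp
      map_add' := fun a b => by
        show Polynomial.aeval t (a + b) (e i) = _
        rw [map_add]; rfl }) with hΨh
  have hΨ : ∀ f : I →₀ ℤ[X], Ψh f = f.sum fun i q => Polynomial.aeval t q (e i) := by
    intro f
    rw [hΨh, Finsupp.liftAddHom_apply]
    rfl
  have hψΨ : ∀ f, ψ f = Ψh f := by intro f; rw [hψ, hΨ]
  -- aeval of Npoly
  set Npoly : ℤ[X] := ∑ j ∈ Finset.range p, (X:ℤ[X]) ^ j with hNpoly
  have haevN : Polynomial.aeval t Npoly = normEnd p t := by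
    rw [hNpoly, normEnd, map_sum]
    exact Finset.sum_congr rfl fun j _ => by rw [map_pow, aeval_X]
  have haev1X : Polynomial.aeval t ((X : ℤ[X]) - C 1) = t - 1 := by
    rw [map_sub, aeval_X, aeval_C, map_one]
  -- congruence mod range(1-t)
  have hmod : ∀ (q : ℤ[X]) (m : M),
      Polynomial.aeval t q m - q.eval 1 • m ∈ AddMonoidHom.range ((1 : AddMonoid.End M) - t) := by
    intro q m
    have hdvd : (X - C 1 : ℤ[X]) ∣ q - C (q.eval 1) := by
      apply dvd_iff_isRoot.mpr
      simp [IsRoot]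
    obtain ⟨r, hr⟩ := hdvd
    have hq : q = (X - C 1) * r + C (q.eval 1) := by rw [← hr]; ring
    have hqm : Polynomial.aeval t q m = (t - 1) (Polynomial.aeval t r m) + q.eval 1 • m := by
      conv_lhs => rw [hq]
      rw [map_add, map_mul, haev1X, aeval_C]
      rw [(show ∀ (a b : AddMonoid.End M) (x : M), (a + b) x = a x + b x from fun _ _ _ => rfl), mulApp, castApp]
    rw [hqm, add_sub_cancel_right, tsub]
    exact neg_mem ⟨_, rfl⟩
  -- Ψh f ≡ Σ f_i(1) e_i mod range(1-t)
  have hsummod : ∀ f : I →₀ ℤ[X],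
      Ψh f - (f.mapRange (fun q : ℤ[X] => q.eval 1) (by simp)).sum (fun i n => n • e i)
        ∈ AddMonoidHom.range ((1 : AddMonoid.End M) - t) := by
    intro f
    rw [hΨ, Finsupp.sum_mapRange_index (fun i => by simp)]
    rw [Finsupp.sum, Finsupp.sum, ← Finset.sum_sub_distrib]
    exact Finset.sum_induction _ _ (fun a b ha hb => add_mem ha hb) (zero_mem _)
      (fun i _ => hmod (f i) (e i))
  -- p divides eval-1's when Ψh f is in the range
  have hdvd1 : ∀ f : I →₀ ℤ[X],
      Ψh f ∈ AddMonoidHom.range ((1 : AddMonoid.End M) - t) →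
      ∀ i, (p : ℤ) ∣ (f i).eval 1 := by
    intro f hf i
    have hsum := hsummod f
    have hmem : (f.mapRange (fun q : ℤ[X] => q.eval 1) (by simp)).sum (fun i n => n • e i)
        ∈ AddMonoidHom.range ((1 : AddMonoid.End M) - t) := by
      have := sub_mem hf hsum
      simpa using this
    have := hindep _ hmem i
    simpa [Finsupp.mapRange_apply] using this
  -- key decomposition step
  have hstep : ∀ f : I →₀ ℤ[X],
      Ψh f ∈ AddMonoidHom.range ((1 : AddMonoid.End M) - t) →
      ∃ g : I →₀ ℤ[X], (∀ i, ∃ a : ℤ, f i = (X - C 1) * g i + C a * Npoly) ∧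
        Ψh f = ((1 : AddMonoid.End M) - t) (- Ψh g) := by
    intro f hf
    have hdv := hdvd1 f hf
    set F : ℤ[X] → ℤ[X] := fun q => (q - C (q.eval 1 / p) * Npoly) /ₘ (X - C 1) with hF
    have hF0 : F 0 = 0 := by
      simp [hF, Polynomial.zero_divByMonic]
    set g : I →₀ ℤ[X] := f.mapRange F hF0 with hg
    have hNev1 : Npoly.eval 1 = (p : ℤ) := by
      simp [hNpoly, eval_finset_sum]
    have hdecomp : ∀ i, f i = (X - C 1) * g i + C ((f i).eval 1 / p) * Npoly := by
      intro i
      have hdvd : (X - C 1 : ℤ[X]) ∣ (f i - C ((f i).eval 1 / p) * Npoly) := by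
        apply dvd_iff_isRoot.mpr
        have hh : ((f i).eval 1 / p) * (p : ℤ) = (f i).eval 1 := Int.ediv_mul_cancel (hdv i)
        simp [IsRoot, hNev1, hh]
      have hmodz : (f i - C ((f i).eval 1 / p) * Npoly) %ₘ (X - C 1) = 0 :=
        (Polynomial.modByMonic_eq_zero_iff_dvd (monic_X_sub_C (1:ℤ))).mpr hdvd
      have hdec := Polynomial.modByMonic_add_div (f i - C ((f i).eval 1 / p) * Npoly)
        (X - C 1)
      rw [hmodz, zero_add] at hdec
      have hgi : g i = (f i - C ((f i).eval 1 / p) * Npoly) /ₘ (X - C 1) := by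
        rw [hg, Finsupp.mapRange_apply]
      rw [hgi, hdec]
      ring
    refine ⟨g, fun i => ⟨(f i).eval 1 / p, hdecomp i⟩, ?_⟩
    have hterm : ∀ i, Polynomial.aeval t (f i) (e i)
        = (t - 1) (Polynomial.aeval t (g i) (e i)) := by
      intro i
      conv_lhs => rw [hdecomp i]
      rw [map_add, map_mul, map_mul, haev1X, haevN, hN0, mul_zero,
        (show ∀ (a b : AddMonoid.End M) (x : M), (a + b) x = a x + b x from fun _ _ _ => rfl), AddMonoid.End.zero_apply, add_zero, mulApp]
    have hh : Ψh f = (t - 1) (Ψh g) := by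
      rw [hΨ f, hΨ g, hg, Finsupp.sum_mapRange_index (fun i => by simp)]
      rw [Finsupp.sum, Finsupp.sum, map_sum]
      refine Finset.sum_congr rfl fun i _ => ?_
      have hgi : F (f i) = g i := by rw [hg, Finsupp.mapRange_apply]
      rw [hgi]
      exact hterm i
    rw [hh, tsub, ← map_neg]
  -- step lemma: (1-t) m ∈ im Ψ implies m ∈ im Ψ
  have hL : ∀ (m : M) (f : I →₀ ℤ[X]), ((1 : AddMonoid.End M) - t) m = Ψh f →
      ∃ g : I →₀ ℤ[X], m = Ψh g := by
    intro m f hm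
    obtain ⟨g, -, hgev⟩ := hstep f ⟨m, hm⟩
    refine ⟨-g, ?_⟩
    have h0 : ((1 : AddMonoid.End M) - t) (m - Ψh (-g)) = 0 := by
      rw [map_sub, hm, map_neg, ← hgev, sub_self]
    exact sub_eq_zero.mp (hInj _ h0)
  have hLiter : ∀ (k : ℕ) (m : M) (f : I →₀ ℤ[X]),
      (((1 : AddMonoid.End M) - t) ^ k) m = Ψh f → ∃ g : I →₀ ℤ[X], m = Ψh g := by
    intro k
    induction k with
    | zero => intro m f hm; exact ⟨f, by rw [← hm, pow_zero, oneApp]⟩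
    | succ n ih =>
      intro m f hm
      rw [pow_succ, mulApp] at hm
      obtain ⟨g, hg⟩ := ih _ f hm
      exact hL m g hg
  -- multiplication action on Ψ
  have hmulpoly : ∀ (w : ℤ[X]) (f : I →₀ ℤ[X]),
      Ψh (f.mapRange (fun q => w * q) (by simp)) = Polynomial.aeval t w (Ψh f) := by
    intro w f
    rw [hΨ, hΨ, Finsupp.sum_mapRange_index (fun i => by simp)]
    rw [Finsupp.sum, Finsupp.sum, map_sum]
    exact Finset.sum_congr rfl fun i _ => by rw [map_mul, mulApp]
  -- the polynomial identity (X-1)^(p-1) = N - p * w₀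
  obtain ⟨w₀, hw₀⟩ := keyW p hp
  have hw' : ((X : ℤ[X]) - C 1) ^ (p-1) = Npoly - C (p:ℤ) * w₀ := by
    rw [← hNpoly] at hw₀
    rw [← hw₀]
    ring
  -- key endomorphism fact: (1-t)^(p-1) z = p • (z'), explicitly
  have hkey : ∀ z : M, (((1 : AddMonoid.End M) - t) ^ (p-1)) z
      = p • (Polynomial.aeval t (C ((-1:ℤ)^p) * w₀) z) := by
    intro z
    have h1t : ((1 : AddMonoid.End M) - t) = Polynomial.aeval t ((C 1 : ℤ[X]) - X) := by
      rw [map_sub, aeval_X, aeval_C, map_one (algebraMap ℤ (AddMonoid.End M))]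
    have hpoly : ((C 1 : ℤ[X]) - X) ^ (p-1)
        = C ((-1:ℤ)^(p-1)) * Npoly - C ((-1:ℤ)^(p-1) * p) * w₀ := by
      have : ((C 1 : ℤ[X]) - X) = -(X - C 1) := by ring
      rw [this, neg_pow, hw']
      rw [map_mul, map_pow]
      simp only [map_neg, map_one, map_natCast]
      ring
    have hCmul : ∀ (a : ℤ) (q : ℤ[X]) (m : M),
        Polynomial.aeval t (C a * q) m = a • (Polynomial.aeval t q m) := by
      intro a q m
      rw [map_mul, mulApp, aeval_C, castApp]
    have h1 : (((1 : AddMonoid.End M) - t) ^ (p-1)) z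
        = Polynomial.aeval t (((C 1 : ℤ[X]) - X)^(p-1)) z := by rw [map_pow, ← h1t]
    rw [h1, hpoly, map_sub, subApp, hCmul, hCmul, hCmul]
    rw [haevN, hN0, AddMonoid.End.zero_apply, smul_zero, zero_sub]
    have hsign : -(((-1:ℤ)^(p-1) * (p:ℤ)) • (Polynomial.aeval t w₀ z))
        = (p:ℤ) • (((-1:ℤ)^p) • (Polynomial.aeval t w₀ z)) := by
      have hpow : ((-1:ℤ))^p = -(-1:ℤ)^(p-1) := by
        conv_lhs => rw [← Nat.sub_add_cancel hp.one_lt.le]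
        rw [pow_succ]
        ring
      rw [hpow, ← smul_assoc, smul_eq_mul, ← neg_smul]
      congr 1
      ring
    rw [hsign, natCast_zsmul]
  -- PART 2 : injectivity mod N
  have part2 : ∀ f : I →₀ ℤ[X], Ψh f = 0 → ∀ i, Npoly ∣ f i := by
    intro f hf i
    set π := Ideal.Quotient.mk (Ideal.span {Npoly}) with hπ
    set J : Ideal (ℤ[X] ⧸ Ideal.span {Npoly}) := Ideal.span {π (X - C 1)} with hJ
    have hiter : ∀ n : ℕ, ∀ f : I →₀ ℤ[X], Ψh f = 0 → ∀ i, π (f i) ∈ J ^ n := by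
      intro n
      induction n with
      | zero => intro f hf i; rw [Submodule.pow_zero, Ideal.one_eq_top]; exact Submodule.mem_top
      | succ n ih =>
        intro f hf i
        have hfr : Ψh f ∈ AddMonoidHom.range ((1 : AddMonoid.End M) - t) :=
          ⟨0, by rw [hf]; exact ((1 : AddMonoid.End M) - t).map_zero⟩
        obtain ⟨g, hdec, hgev⟩ := hstep f hfr
        have hg0 : Ψh g = 0 := by
          have h1 : ((1 : AddMonoid.End M) - t) (- Ψh g) = 0 := by rw [← hgev, hf]
          have := hInj _ h1
          rwa [neg_eq_zero] at this
        have hgn := ih g hg0 i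
        obtain ⟨a, ha⟩ := hdec i
        have hπf : π (f i) = π (X - C 1) * π (g i) := by
          rw [ha, map_add, map_mul, map_mul]
          have : π Npoly = 0 := by
            rw [hπ, Ideal.Quotient.eq_zero_iff_mem]
            exact Ideal.subset_span rfl
          rw [this, mul_zero, add_zero]
        rw [hπf, mul_comm, Submodule.pow_succ]
        exact Ideal.mul_mem_mul hgn (Ideal.subset_span rfl)
    exact krull p hp (f i) (fun n => hiter n f hf i)
  refine ⟨hN0, ?_, ?_, ?_⟩
  · -- injectivity conclusion
    intro f hf i
    have h0 : Ψh f = 0 := by rw [← hψΨ, hf]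
    exact part2 f h0 i
  · -- PART 3: p-divisibility of the cokernel
    intro x
    have hdiv : ∀ k : ℕ, ∃ (f : I →₀ ℤ[X]) (z : M),
        x = Ψh f + (((1 : AddMonoid.End M) - t) ^ k) z := by
      intro k
      induction k with
      | zero => exact ⟨0, x, by rw [map_zero, pow_zero, oneApp, zero_add]⟩
      | succ n ih =>
        obtain ⟨f, z, hz⟩ := ih
        obtain ⟨c, hc⟩ := hspan z
        obtain ⟨w, hw⟩ := hc
        set fc : I →₀ ℤ[X] := c.mapRange (fun n0 : ℤ => C n0 * ((C 1 : ℤ[X]) - X) ^ n)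
          (by simp) with hfc
        have hΨfc : Ψh fc = (((1 : AddMonoid.End M) - t) ^ n) (c.sum fun i n0 => n0 • e i) := by
          rw [hΨ, hfc, Finsupp.sum_mapRange_index (fun i => by simp)]
          rw [Finsupp.sum, Finsupp.sum, map_sum]
          refine Finset.sum_congr rfl fun i _ => ?_
          rw [map_mul, map_pow, aeval_C, mulApp, castApp]
          rw [map_zsmul]
          congr 2
          simp
        have hzz : z = (c.sum fun i n0 => n0 • e i) + ((1 : AddMonoid.End M) - t) w := by
          rw [show ((1 : AddMonoid.End M) - t) w = _ from hw]; abel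
        refine ⟨f + fc, w, ?_⟩
        rw [map_add, hz, hzz, map_add, hΨfc]
        rw [pow_succ, mulApp]
        abel
    obtain ⟨f, z, hz⟩ := hdiv (p - 1)
    refine ⟨Polynomial.aeval t (C ((-1:ℤ)^p) * w₀) z, f, ?_⟩
    rw [hψΨ, hz, hkey z, add_comm]
  · -- PART 4: p-torsion-freeness of the cokernel
    rintro x ⟨f, hf⟩
    rw [hψΨ] at hf
    have hx : (((1 : AddMonoid.End M) - t) ^ (p-1)) x
        = Ψh (f.mapRange (fun q => (C ((-1:ℤ)^p) * w₀) * q) (by simp)) := by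
      rw [hkey x, hmulpoly]
      rw [← map_nsmul, hf]
    obtain ⟨g, hg⟩ := hLiter (p-1) x _ hx
    exact ⟨g, by rw [hψΨ]; exact hg⟩
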